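/- arXiv:1707.01650 — 3 statements merged into one kernel-verified Lean document; each statement's English description precedes it below -/
import Mathlib

section
/- Let G be a group, let N be the additive subgroup of the group ring ℤ[G] generated by the set {h - h⁻¹ : h ∈ G} together with the element 1, and let Λ̃ = ℤ[G]/N. For every g ∈ G with g ≠ 1, the image [g] of g in Λ̃ has infinite order; equivalently, the additive map ℤ → Λ̃ sending n to n·[g] is injective, so Λ̃ contains a subgroup isomorphic to ℤ generated by [g]. -/
/-- The additive subgroup `N` of the group ring `ℤ[G]` generated by the
elements `h - h⁻¹` for `h ∈ G` together with `1` (the group-ring element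
supported at the identity). -/
noncomputable def relatorSubgroup (G : Type*) [Group G] : AddSubgroup (MonoidAlgebra ℤ G) :=
  AddSubgroup.closure
    ({x : MonoidAlgebra ℤ G |
        ∃ h : G, x = MonoidAlgebra.of ℤ G h - MonoidAlgebra.of ℤ G h⁻¹} ∪ {1})

/-- In the quotient `Λ̃ = ℤ[G]/N`, the image of any `g ≠ 1` has infinite
order: `n ↦ n • [g]` is injective, so `[g]` generates a subgroup of `Λ̃`
isomorphic to `ℤ`. -/
theorem infinite_order_in_reduced_group_ring
    (G : Type*) [Group G] (g : G) (hg : g ≠ 1) :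
    Function.Injective fun n : ℤ =>
      n • (QuotientAddGroup.mk (MonoidAlgebra.of ℤ G g) :
        MonoidAlgebra ℤ G ⧸ relatorSubgroup G) := by
  classical
  -- The additive functional x ↦ x(g) + x(g⁻¹) kills the relator subgroup.
  set φ : MonoidAlgebra ℤ G →+ ℤ :=
    (Finsupp.applyAddHom g).comp (MonoidAlgebra.coeffAddEquiv (R := ℤ) (M := G)).toAddMonoidHom +
      (Finsupp.applyAddHom g⁻¹).comp (MonoidAlgebra.coeffAddEquiv (R := ℤ) (M := G)).toAddMonoidHom with hφ
  have hφ_apply : ∀ x : MonoidAlgebra ℤ G, φ x = x.coeff g + x.coeff g⁻¹ := by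
    intro x; rfl
  have hφN : ∀ x ∈ relatorSubgroup G, φ x = 0 := by
    intro x hx
    refine AddSubgroup.closure_induction ?_ ?_ ?_ ?_ hx
    · rintro y (⟨h, rfl⟩ | hy)
      · rw [map_sub, hφ_apply, hφ_apply]
        simp only [MonoidAlgebra.of_apply, MonoidAlgebra.coeff_single, Finsupp.single_apply]
        have e1 : (h = g) = (h⁻¹ = g⁻¹) := by
          simp [inv_eq_iff_eq_inv, eq_comm]
        have e2 : (h = g⁻¹) = (h⁻¹ = g) := by
          refine propext ⟨fun hh => by rw [hh]; simp, fun hh => by rw [← hh]; simp⟩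
        rw [e1, e2]; ring
      · simp only [Set.mem_singleton_iff] at hy
        subst hy
        rw [hφ_apply]
        have : (1 : MonoidAlgebra ℤ G) = MonoidAlgebra.single 1 1 := rfl
        rw [this]
        have h1 : ((1:G) = g) = False := by simp [Ne.symm hg]
        have h2 : ((1:G) = g⁻¹) = False := by
          refine eq_false fun hh => hg (inv_eq_one.mp hh.symm)
        simp [MonoidAlgebra.coeff_single, Finsupp.single_apply, h1, h2]
    · simp
    · intro a b _ _ ha hb; rw [map_add, ha, hb]; ring
    · intro a _ ha; rw [map_neg, ha]; ring
  have hval : φ (MonoidAlgebra.of ℤ G g) = 1 + (if g = g⁻¹ then 1 else 0) := by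
    rw [hφ_apply]
    simp [MonoidAlgebra.of_apply, MonoidAlgebra.coeff_single, Finsupp.single_apply]
  have hval_ne : φ (MonoidAlgebra.of ℤ G g) ≠ 0 := by
    rw [hval]; split_ifs <;> norm_num
  intro n m hnm
  simp only at hnm
  have hmk : (QuotientAddGroup.mk ((n - m) • MonoidAlgebra.of ℤ G g) :
      MonoidAlgebra ℤ G ⧸ relatorSubgroup G) = 0 := by
    rw [sub_smul]
    rw [QuotientAddGroup.mk_sub] at *
    simp only [← QuotientAddGroup.mk_zsmul] at hnm ⊢
    rw [hnm]; simp
  have hmem : (n - m) • MonoidAlgebra.of ℤ G g ∈ relatorSubgroup G :=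
    (QuotientAddGroup.eq_zero_iff _).mp hmk
  have := hφN _ hmem
  rw [map_zsmul, smul_eq_mul, mul_eq_zero] at this
  have : n - m = 0 := by
    rcases this with h | h
    · exact h
    · exact absurd h hval_ne
  linarith [this]
end

section
/- Let G be a group, let N be the additive subgroup of the group ring ℤ[G] generated by the set {h - h⁻¹ : h ∈ G} together with the element 1, and let Λ̃ = ℤ[G]/N. Suppose g, h ∈ G satisfy g ≠ 1, h ≠ 1, h ≠ g, and h ≠ g⁻¹. Then the images [g] and [h] in Λ̃ are ℤ-linearly independent: for all integers m and n, if m·[g] + n·[h] = 0 in Λ̃ then m = 0 and n = 0. In particular, for all integers m, n, the equality m·[g] = n·[h] in Λ̃ holds only when m = n = 0. -/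
section aux
variable {G : Type*} [Group G]

attribute [local instance] Classical.propDecidable

/-- The coefficient-sum functional `x ↦ x g + x g⁻¹` (counting once if `g = g⁻¹`). -/
noncomputable def phiAux (g : G) : MonoidAlgebra ℤ G →+ ℤ :=
  (((Finsupp.applyAddHom g) + (if g = g⁻¹ then 0 else Finsupp.applyAddHom g⁻¹) :
    (G →₀ ℤ) →+ ℤ)).comp
    (MonoidAlgebra.coeffAddEquiv : MonoidAlgebra ℤ G ≃+ (G →₀ ℤ)).toAddMonoidHom

lemma phiAux_apply (g : G) (x : MonoidAlgebra ℤ G) :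
    phiAux g x = x.coeff g + (if g = g⁻¹ then 0 else x.coeff g⁻¹) := by
  unfold phiAux
  split <;> simp <;> rfl

lemma phiAux_of (g k : G) :
    phiAux g (MonoidAlgebra.of ℤ G k) = if k = g ∨ k = g⁻¹ then 1 else 0 := by
  rw [phiAux_apply]
  simp only [MonoidAlgebra.of_apply, MonoidAlgebra.coeff_single, Finsupp.single_apply]
  rcases eq_or_ne g g⁻¹ with e | e
  · rw [if_pos e]
    by_cases hk : k = g <;> simp [hk, ← e]
  · rw [if_neg e]
    by_cases h1 : k = g <;> by_cases h2 : k = g⁻¹ <;> simp_all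

lemma phiAux_ker (g : G) (hg : g ≠ 1) :
    relatorSubgroup G ≤ (phiAux g).ker := by
  rw [relatorSubgroup, AddSubgroup.closure_le]
  rintro x (⟨k, rfl⟩ | rfl)
  · simp only [SetLike.mem_coe, AddMonoidHom.mem_ker, map_sub, phiAux_of]
    have : (k⁻¹ = g ∨ k⁻¹ = g⁻¹) ↔ (k = g ∨ k = g⁻¹) := by
      rw [inv_eq_iff_eq_inv, inv_eq_iff_eq_inv, inv_inv, or_comm]
    simp only [this, sub_self]
  · have h1 : (1 : MonoidAlgebra ℤ G) = MonoidAlgebra.of ℤ G 1 := rfl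
    have h2 : ¬((1 : G) = g ∨ (1 : G) = g⁻¹) := by
      rintro (e | e)
      · exact hg e.symm
      · exact hg (by rw [← inv_inv g, ← e, inv_one])
    simp only [SetLike.mem_coe, AddMonoidHom.mem_ker, h1, phiAux_of, if_neg h2]

/-- The functional descended to the quotient. -/
noncomputable def phiBar (g : G) (hg : g ≠ 1) :
    (MonoidAlgebra ℤ G ⧸ relatorSubgroup G) →+ ℤ :=
  QuotientAddGroup.lift _ (phiAux g) (phiAux_ker g hg)

lemma phiBar_mk (g : G) (hg : g ≠ 1) (x : MonoidAlgebra ℤ G) :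
    phiBar g hg (QuotientAddGroup.mk x) = phiAux g x := rfl

lemma key (g k : G) (hg : g ≠ 1) (hkg : k ≠ g) (hkg' : k ≠ g⁻¹) :
    ∀ m n : ℤ,
      m • (QuotientAddGroup.mk (MonoidAlgebra.of ℤ G g) :
            MonoidAlgebra ℤ G ⧸ relatorSubgroup G) +
        n • (QuotientAddGroup.mk (MonoidAlgebra.of ℤ G k) :
            MonoidAlgebra ℤ G ⧸ relatorSubgroup G) = 0 → m = 0 := by
  intro m n hmn
  have := congrArg (phiBar g hg) hmn
  simp only [map_add, map_zsmul, map_zero, phiBar_mk, phiAux_of] at this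
  rw [if_pos (Or.inl trivial), if_neg (by tauto)] at this
  simpa using this

end aux

/-- If `g ≠ 1`, `h ≠ 1`, `h ≠ g` and `h ≠ g⁻¹`, then the images `[g]` and
`[h]` in `Λ̃ = ℤ[G]/N` are `ℤ`-linearly independent; in particular
`m • [g] = n • [h]` only when `m = n = 0`. -/
theorem linearIndependent_in_reduced_group_ring
    (G : Type*) [Group G] (g h : G)
    (hg : g ≠ 1) (hh : h ≠ 1) (hhg : h ≠ g) (hhg' : h ≠ g⁻¹) :
    (∀ m n : ℤ,
        m • (QuotientAddGroup.mk (MonoidAlgebra.of ℤ G g) :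
              MonoidAlgebra ℤ G ⧸ relatorSubgroup G) +
          n • (QuotientAddGroup.mk (MonoidAlgebra.of ℤ G h) :
              MonoidAlgebra ℤ G ⧸ relatorSubgroup G) = 0 →
        m = 0 ∧ n = 0) ∧
    (∀ m n : ℤ,
        m • (QuotientAddGroup.mk (MonoidAlgebra.of ℤ G g) :
              MonoidAlgebra ℤ G ⧸ relatorSubgroup G) =
          n • (QuotientAddGroup.mk (MonoidAlgebra.of ℤ G h) :
              MonoidAlgebra ℤ G ⧸ relatorSubgroup G) →
        m = 0 ∧ n = 0) := by
  have hgh : g ≠ h := fun e => hhg e.symm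
  have hgh' : g ≠ h⁻¹ := by
    intro e; exact hhg' (by rw [e, inv_inv])
  have main : ∀ m n : ℤ,
      m • (QuotientAddGroup.mk (MonoidAlgebra.of ℤ G g) :
            MonoidAlgebra ℤ G ⧸ relatorSubgroup G) +
        n • (QuotientAddGroup.mk (MonoidAlgebra.of ℤ G h) :
            MonoidAlgebra ℤ G ⧸ relatorSubgroup G) = 0 → m = 0 ∧ n = 0 := by
    intro m n hmn
    refine ⟨key g h hg hhg hhg' m n hmn, ?_⟩
    rw [add_comm] at hmn
    exact key h g hh hgh hgh' n m hmn
  refine ⟨main, fun m n hmn => ?_⟩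
  have : m • (QuotientAddGroup.mk (MonoidAlgebra.of ℤ G g) :
            MonoidAlgebra ℤ G ⧸ relatorSubgroup G) +
        (-n) • (QuotientAddGroup.mk (MonoidAlgebra.of ℤ G h) :
            MonoidAlgebra ℤ G ⧸ relatorSubgroup G) = 0 := by
    rw [neg_smul, hmn, add_neg_cancel]
  obtain ⟨h1, h2⟩ := main m (-n) this
  exact ⟨h1, by omega⟩
end

section
/- Let G be a nontrivial group generated by two elements γ and α satisfying the two relations γ²αγ⁻¹αγ⁻¹α⁻¹γα⁻¹γα⁻¹γ⁻¹αγ⁻¹α = 1 and γ⁻¹αγ⁻¹α²γαγ⁻²α³ = 1. Then γ ≠ 1. -/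
/-- If a nontrivial group `G` is generated by two elements `γ` and `α`
satisfying the two Wirtinger relations of the fundamental group of the
boundary of the Mazur manifold, then `γ ≠ 1`. -/
theorem mazur_gamma_ne_one
    (G : Type*) [Group G] [Nontrivial G] (γ α : G)
    (hgen : Subgroup.closure ({γ, α} : Set G) = ⊤)
    (h₁ : γ ^ 2 * α * γ⁻¹ * α * γ⁻¹ * α⁻¹ * γ * α⁻¹ * γ * α⁻¹ * γ⁻¹ * α * γ⁻¹ * α = 1)
    (h₂ : γ⁻¹ * α * γ⁻¹ * α ^ 2 * γ * α * γ⁻¹ ^ 2 * α ^ 3 = 1) :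
    γ ≠ 1 := by
  intro hγ
  subst hγ
  simp only [one_pow, inv_one, one_mul, mul_one] at h₁
  have hα : α = 1 := by group at h₁; simpa using h₁
  subst hα
  rw [Set.pair_eq_singleton, Subgroup.closure_singleton_one] at hgen
  exact bot_ne_top (α := Subgroup G) hgen
end
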